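/- Let N ≥ 4 be an integer, Δθ = 2π/N, and let indices i be taken modulo N. Let h_i > 0 be constants and let ω : [0,T] → (ZMod N → ℝ) be differentiable satisfying ω̇_i = h_i·[ω_i²·(ω_{i+1} - 2ω_i + ω_{i-1})/(2·(1 - cos Δθ)) + ω_i³] for all i and t. Then for all t, d/dt ∑_{i=0}^{N-1} [ω_i² - (ω_{i+1} - ω_i)²/(2·(1 - cos Δθ))] = 2·∑_{i=0}^{N-1} h_i·ω_i²·[ω_i + (ω_{i+1} - 2ω_i + ω_{i-1})/(2·(1 - cos Δθ))]² ≥ 0. In particular, ∑_{i=0}^{N-1} (ω_{i+1}(t) - ω_i(t))²/(2·(1 - cos Δθ)) - ∑_{i=0}^{N-1} ω_i(t)² is a nonincreasing function of t. -/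

import Mathlib

open Real

private lemma reindex_zmod {N : ℕ} [NeZero N] (F : ZMod N → ℝ) :
    ∑ i : ZMod N, F (i + 1) = ∑ i : ZMod N, F i :=
  Fintype.sum_equiv (Equiv.addRight 1) _ _ (fun _ => rfl)

private lemma key_alg {N : ℕ} [NeZero N] (c : ℝ) (hc : c ≠ 0)
    (h w : ZMod N → ℝ) :
    ∑ i : ZMod N,
      (2 * w i ^ 1 *
          (h i * (w i ^ 2 * (w (i + 1) - 2 * w i + w (i - 1)) / c + w i ^ 3))
        - 2 * (w (i + 1) - w i) ^ 1 *
          ((h (i + 1) * (w (i + 1) ^ 2 * (w (i + 1 + 1) - 2 * w (i + 1) + w (i + 1 - 1)) / c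
              + w (i + 1) ^ 3))
           - (h i * (w i ^ 2 * (w (i + 1) - 2 * w i + w (i - 1)) / c + w i ^ 3))) / c)
    = 2 * ∑ i : ZMod N, h i * w i ^ 2 *
        (w i + (w (i + 1) - 2 * w i + w (i - 1)) / c) ^ 2 := by
  set d : ZMod N → ℝ :=
    fun i => h i * (w i ^ 2 * (w (i + 1) - 2 * w i + w (i - 1)) / c + w i ^ 3) with hd
  set Φ : ZMod N → ℝ := fun i => (w i - w (i - 1)) * d i with hΦ
  have hsum : ∑ i : ZMod N,
      (2 * w i ^ 1 * d i - 2 * (w (i + 1) - w i) ^ 1 * (d (i + 1) - d i) / c)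
      = ∑ i : ZMod N,
      ((2 * w i * d i + 2 * (w (i + 1) - 2 * w i + w (i - 1)) * d i / c)
        - (2 / c) * (Φ (i + 1) - Φ i)) := by
    apply Finset.sum_congr rfl
    intro i _
    have h1 : i + 1 - 1 = i := by ring
    simp only [hΦ, h1]
    field_simp
    ring
  rw [hsum, Finset.sum_sub_distrib]
  have htele : ∑ i : ZMod N, (2 / c) * (Φ (i + 1) - Φ i) = 0 := by
    simp only [mul_sub, Finset.sum_sub_distrib]
    rw [← Finset.mul_sum, ← Finset.mul_sum, reindex_zmod Φ, sub_self]
  rw [htele, sub_zero, Finset.mul_sum]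
  apply Finset.sum_congr rfl
  intro i _
  simp only [hd]
  field_simp
  ring

theorem stmt9 (N : ℕ) [NeZero N] (hN : 4 ≤ N) (Δθ : ℝ) (hΔθ : Δθ = 2 * π / N)
    (T : ℝ) (h : ZMod N → ℝ) (hh : ∀ i, 0 < h i)
    (ω : ℝ → ZMod N → ℝ)
    (hode : ∀ t ∈ Set.Icc (0:ℝ) T, ∀ i,
      HasDerivWithinAt (fun s => ω s i)
        (h i * ((ω t i) ^ 2 * (ω t (i + 1) - 2 * ω t i + ω t (i - 1))
            / (2 * (1 - Real.cos Δθ)) + (ω t i) ^ 3))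
        (Set.Icc 0 T) t) :
    (∀ t ∈ Set.Icc (0:ℝ) T,
      HasDerivWithinAt
        (fun s => ∑ i : ZMod N,
          ((ω s i) ^ 2 - (ω s (i + 1) - ω s i) ^ 2 / (2 * (1 - Real.cos Δθ))))
        (2 * ∑ i : ZMod N, h i * (ω t i) ^ 2 *
          (ω t i + (ω t (i + 1) - 2 * ω t i + ω t (i - 1))
              / (2 * (1 - Real.cos Δθ))) ^ 2)
        (Set.Icc 0 T) t ∧
      0 ≤ 2 * ∑ i : ZMod N, h i * (ω t i) ^ 2 *
          (ω t i + (ω t (i + 1) - 2 * ω t i + ω t (i - 1))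
              / (2 * (1 - Real.cos Δθ))) ^ 2) ∧
    AntitoneOn
      (fun t => ∑ i : ZMod N, (ω t (i + 1) - ω t i) ^ 2 / (2 * (1 - Real.cos Δθ))
        - ∑ i : ZMod N, (ω t i) ^ 2)
      (Set.Icc 0 T) := by
  have hNpos : (0 : ℝ) < N := by positivity
  have hΔθpos : 0 < Δθ := by
    rw [hΔθ]; positivity
  have hΔθle : Δθ ≤ π := by
    rw [hΔθ, div_le_iff₀ hNpos]
    calc 2 * π = π * 2 := by ring
    _ ≤ π * N := by
        apply mul_le_mul_of_nonneg_left _ Real.pi_pos.le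
        exact_mod_cast le_trans (by norm_num) hN
  have hcos : Real.cos Δθ < 1 := by
    calc Real.cos Δθ < Real.cos 0 := Real.cos_lt_cos_of_nonneg_of_le_pi le_rfl hΔθle hΔθpos
    _ = 1 := Real.cos_zero
  set c : ℝ := 2 * (1 - Real.cos Δθ) with hc
  have hcpos : 0 < c := by rw [hc]; nlinarith
  have hcne : c ≠ 0 := hcpos.ne'
  -- the derivative statement
  have main : ∀ t ∈ Set.Icc (0:ℝ) T,
      HasDerivWithinAt
        (fun s => ∑ i : ZMod N,
          ((ω s i) ^ 2 - (ω s (i + 1) - ω s i) ^ 2 / c))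
        (2 * ∑ i : ZMod N, h i * (ω t i) ^ 2 *
          (ω t i + (ω t (i + 1) - 2 * ω t i + ω t (i - 1)) / c) ^ 2)
        (Set.Icc 0 T) t := by
    intro t ht
    set d : ZMod N → ℝ :=
      fun i => h i * (ω t i ^ 2 * (ω t (i + 1) - 2 * ω t i + ω t (i - 1)) / c + ω t i ^ 3)
      with hd
    have hD : HasDerivWithinAt
        (fun s => ∑ i : ZMod N,
          ((ω s i) ^ 2 - (ω s (i + 1) - ω s i) ^ 2 / c))
        (∑ i : ZMod N,
          (2 * ω t i ^ 1 * d i - 2 * (ω t (i + 1) - ω t i) ^ 1 * (d (i + 1) - d i) / c))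
        (Set.Icc 0 T) t := by
      apply HasDerivWithinAt.fun_sum
      intro i _
      have h1 := (hode t ht i).fun_pow 2
      have h2 := (((hode t ht (i + 1)).sub (hode t ht i)).fun_pow 2).div_const c
      simpa [hd] using h1.fun_sub h2
    have := key_alg (N := N) c hcne h (ω t)
    rw [this] at hD
    exact hD
  refine ⟨fun t ht => ⟨main t ht, ?_⟩, ?_⟩
  · apply mul_nonneg (by norm_num)
    apply Finset.sum_nonneg
    intro i _
    have := (hh i).le
    positivity
  · -- antitone part
    have hfun : (fun t => ∑ i : ZMod N, (ω t (i + 1) - ω t i) ^ 2 / c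
        - ∑ i : ZMod N, (ω t i) ^ 2)
        = fun s => -(∑ i : ZMod N, ((ω s i) ^ 2 - (ω s (i + 1) - ω s i) ^ 2 / c)) := by
      funext s
      rw [Finset.sum_sub_distrib]
      ring
    rw [hfun]
    apply antitoneOn_of_hasDerivWithinAt_nonpos (f' := fun t =>
        -(2 * ∑ i : ZMod N, h i * (ω t i) ^ 2 *
          (ω t i + (ω t (i + 1) - 2 * ω t i + ω t (i - 1)) / c) ^ 2))
        (convex_Icc 0 T)
    · intro x hx
      exact ((main x hx).neg).continuousWithinAt
    · intro x hx
      have hx' : x ∈ Set.Icc (0:ℝ) T := interior_subset hx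
      exact ((main x hx').neg).mono interior_subset
    · intro x hx
      have hx' : x ∈ Set.Icc (0:ℝ) T := interior_subset hx
      rw [neg_nonpos]
      apply mul_nonneg (by norm_num)
      apply Finset.sum_nonneg
      intro i _
      have := (hh i).le
      positivity
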